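/- Majorization of degrees by eigenvalues: let T_1,...,T_n be nonempty subsets of {1,...,m}, let a_i = #{j : i ∈ T_j} with a_1 ≥ ... ≥ a_m after relabeling, let Q_T = P_T + (1/m)J and M = ∑_j Q_{T_j} with eigenvalues λ_1 ≥ ... ≥ λ_m. Then (λ_1,...,λ_m) majorizes (a_1,...,a_m): for every k < m, ∑_{i≤k} λ_i ≥ ∑_{i≤k} a_i, and ∑_i λ_i = ∑_i a_i. -/

import Mathlib

open Matrix Finset

noncomputable def indVec (m : ℕ) (T : Finset (Fin m)) : Fin m → ℝ :=
  fun i => if i ∈ T then 1 else 0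

lemma vmv_mul_vmv {m : ℕ} (a b c d : Fin m → ℝ) :
    vecMulVec a b * vecMulVec c d = (b ⬝ᵥ c) • vecMulVec a d := by
  ext i j
  simp [Matrix.mul_apply, vecMulVec_apply, dotProduct, Finset.sum_mul, Finset.mul_sum]
  ring_nf
  exact Finset.sum_congr rfl fun x _ => by ring

lemma diag_mul_vmv {m : ℕ} (f a b : Fin m → ℝ) :
    Matrix.diagonal f * vecMulVec a b = vecMulVec (fun i => f i * a i) b := by
  ext i j
  rw [Matrix.diagonal_mul]
  simp [vecMulVec_apply]; ring

lemma vmv_mul_diag {m : ℕ} (f a b : Fin m → ℝ) :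
    vecMulVec a b * Matrix.diagonal f = vecMulVec a (fun j => b j * f j) := by
  ext i j
  rw [Matrix.mul_diagonal]
  simp [vecMulVec_apply]; ring

lemma trace_vmv {m : ℕ} (a b : Fin m → ℝ) :
    (vecMulVec a b).trace = a ⬝ᵥ b := by
  simp [Matrix.trace, Matrix.diag, vecMulVec_apply, dotProduct]

lemma trace_diag_mul {m : ℕ} (d : Fin m → ℝ) (N : Matrix (Fin m) (Fin m) ℝ) :
    (Matrix.diagonal d * N).trace = ∑ i, d i * N i i := by
  simp [Matrix.trace, Matrix.diag, Matrix.diagonal_mul]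

lemma ind_dot_ind {m : ℕ} (T S : Finset (Fin m)) :
    indVec m T ⬝ᵥ indVec m S = ((T ∩ S).card : ℝ) := by
  simp [dotProduct, indVec, ite_and, ← Finset.mem_inter]
  rw [Finset.inter_comm]

lemma ind_dot_one {m : ℕ} (T : Finset (Fin m)) :
    indVec m T ⬝ᵥ (fun _ => (1:ℝ)) = (T.card : ℝ) := by
  simp [dotProduct, indVec]

lemma one_dot_ind {m : ℕ} (T : Finset (Fin m)) :
    (fun _ => (1:ℝ)) ⬝ᵥ indVec m T = (T.card : ℝ) := by
  simp [dotProduct, indVec]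

lemma one_dot_one {m : ℕ} : (fun _ => (1:ℝ) : Fin m → ℝ) ⬝ᵥ (fun _ => (1:ℝ)) = (m : ℝ) := by
  simp [dotProduct]

noncomputable def Pmat (m : ℕ) (T : Finset (Fin m)) : Matrix (Fin m) (Fin m) ℝ :=
  Matrix.diagonal (indVec m T) - ((T.card : ℝ))⁻¹ • vecMulVec (indVec m T) (indVec m T)

noncomputable def Qmat (m : ℕ) (T : Finset (Fin m)) : Matrix (Fin m) (Fin m) ℝ :=
  Pmat m T + ((m : ℝ))⁻¹ • Matrix.of (fun _ _ => (1 : ℝ))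

lemma Qmat_eq (m : ℕ) (T : Finset (Fin m)) :
    Qmat m T = Matrix.diagonal (indVec m T)
      - ((T.card : ℝ))⁻¹ • vecMulVec (indVec m T) (indVec m T)
      + ((m : ℝ))⁻¹ • vecMulVec (fun _ => (1:ℝ)) (fun _ => (1:ℝ)) := by
  have : (Matrix.of (fun _ _ => (1 : ℝ)) : Matrix (Fin m) (Fin m) ℝ)
      = vecMulVec (fun _ => (1:ℝ)) (fun _ => (1:ℝ)) := by
    ext i j; simp [vecMulVec_apply]
  rw [Qmat, Pmat, this]

lemma trace_Q_formula (m : ℕ) (hm : 0 < m) (T S : Finset (Fin m)) (hT : T.Nonempty) (hS : S.Nonempty) :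
    (Qmat m T * Qmat m S).trace
      = ((T ∩ S).card : ℝ) + (1 - ((T ∩ S).card : ℝ) / (S.card : ℝ)) * (1 - ((T ∩ S).card : ℝ) / (T.card : ℝ)) := by
  rw [Qmat_eq, Qmat_eq]
  simp only [Matrix.add_mul, Matrix.mul_add, Matrix.sub_mul, Matrix.mul_sub,
    Matrix.smul_mul, Matrix.mul_smul, Matrix.trace_add, Matrix.trace_sub, Matrix.trace_smul,
    Matrix.diagonal_mul_diagonal, vmv_mul_vmv, diag_mul_vmv, vmv_mul_diag, trace_vmv,
    Matrix.trace_diagonal, smul_smul, smul_eq_mul]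
  simp only [dotProduct, indVec, ite_mul, mul_ite, mul_one, mul_zero, one_mul, zero_mul,
    if_pos, Finset.sum_ite_mem, Finset.univ_inter, Finset.sum_const, Finset.sum_boole]
  have h1 : S ∩ T ∩ T = T ∩ S := by rw [Finset.inter_assoc, Finset.inter_self, Finset.inter_comm]
  have h2 : S ∩ S ∩ T = T ∩ S := by rw [Finset.inter_self, Finset.inter_comm]
  have h3 : S ∩ T = T ∩ S := Finset.inter_comm S T
  rw [h1, h2, h3]
  have hTc : ((T.card : ℝ)) ≠ 0 := Nat.cast_ne_zero.mpr (Finset.card_ne_zero_of_mem hT.choose_spec)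
  have hSc : ((S.card : ℝ)) ≠ 0 := Nat.cast_ne_zero.mpr (Finset.card_ne_zero_of_mem hS.choose_spec)
  have hmc : ((m : ℝ)) ≠ 0 := Nat.cast_ne_zero.mpr hm.ne'
  simp only [nsmul_eq_mul, mul_one, Finset.card_univ, Fintype.card_fin]
  field_simp
  ring

lemma indVec_self_mul (m : ℕ) (T : Finset (Fin m)) :
    (fun i => indVec m T i * indVec m T i) = indVec m T := by
  funext i; by_cases h : i ∈ T <;> simp [indVec, h]

lemma Qmat_idem (m : ℕ) (hm : 0 < m) (T : Finset (Fin m)) (hT : T.Nonempty) :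
    Qmat m T * Qmat m T = Qmat m T := by
  have hTc : ((T.card : ℝ)) ≠ 0 := Nat.cast_ne_zero.mpr (Finset.card_ne_zero_of_mem hT.choose_spec)
  have hmc : ((m : ℝ)) ≠ 0 := Nat.cast_ne_zero.mpr hm.ne'
  rw [Qmat_eq]
  simp only [Matrix.add_mul, Matrix.mul_add, Matrix.sub_mul, Matrix.mul_sub,
    Matrix.smul_mul, Matrix.mul_smul, Matrix.diagonal_mul_diagonal, vmv_mul_vmv,
    diag_mul_vmv, vmv_mul_diag, indVec_self_mul, smul_smul,
    ind_dot_ind, ind_dot_one, one_dot_ind, one_dot_one, Finset.inter_self,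
    mul_one, one_mul]
  match_scalars <;> field_simp <;> ring

lemma vmv_herm {m : ℕ} (a : Fin m → ℝ) : (vecMulVec a a).IsHermitian := by
  ext i j
  simp [Matrix.conjTranspose_apply, vecMulVec_apply, mul_comm]

lemma herm_smul {m : ℕ} (c : ℝ) {A : Matrix (Fin m) (Fin m) ℝ} (h : A.IsHermitian) :
    (c • A).IsHermitian := by
  unfold Matrix.IsHermitian at *
  rw [Matrix.conjTranspose_smul, h]
  simp

lemma Qmat_herm (m : ℕ) (T : Finset (Fin m)) : (Qmat m T).IsHermitian := by
  rw [Qmat_eq]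
  exact ((Matrix.isHermitian_diagonal _).sub (herm_smul _ (vmv_herm _))).add (herm_smul _ (vmv_herm _))

lemma Qmat_psd (m : ℕ) (hm : 0 < m) (T : Finset (Fin m)) (hT : T.Nonempty) :
    (Qmat m T).PosSemidef := by
  have h := Matrix.posSemidef_conjTranspose_mul_self (Qmat m T)
  rwa [(Qmat_herm m T).eq, Qmat_idem m hm T hT] at h

lemma one_sub_Qmat_psd (m : ℕ) (hm : 0 < m) (T : Finset (Fin m)) (hT : T.Nonempty) :
    ((1 : Matrix (Fin m) (Fin m) ℝ) - Qmat m T).PosSemidef := by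
  have hherm : ((1 : Matrix (Fin m) (Fin m) ℝ) - Qmat m T).IsHermitian :=
    Matrix.isHermitian_one.sub (Qmat_herm m T)
  have hidem : ((1 : Matrix (Fin m) (Fin m) ℝ) - Qmat m T) * ((1 : Matrix (Fin m) (Fin m) ℝ) - Qmat m T)
      = (1 : Matrix (Fin m) (Fin m) ℝ) - Qmat m T := by
    simp [Matrix.mul_sub, Matrix.sub_mul, Qmat_idem m hm T hT]
  have h := Matrix.posSemidef_conjTranspose_mul_self ((1 : Matrix (Fin m) (Fin m) ℝ) - Qmat m T)
  rwa [hherm.eq, hidem] at h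

lemma Qmat_trace (m : ℕ) (T : Finset (Fin m)) (hT : T.Nonempty) :
    (Qmat m T).trace = (T.card : ℝ) := by
  have hmc : ((m : ℝ)) ≠ 0 := by
    have : 0 < m := (hT.choose : Fin m).pos
    exact Nat.cast_ne_zero.mpr this.ne'
  rw [Qmat_eq]
  simp only [Matrix.trace_add, Matrix.trace_sub, Matrix.trace_smul, trace_vmv,
    Matrix.trace_diagonal, ind_dot_ind, ind_dot_one, one_dot_ind, one_dot_one,
    Finset.inter_self, smul_eq_mul]
  have hTc : ((T.card : ℝ)) ≠ 0 := Nat.cast_ne_zero.mpr (Finset.card_ne_zero_of_mem hT.choose_spec)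
  have : ∑ i, indVec m T i = (T.card : ℝ) := by simp [indVec]
  rw [this]
  field_simp
  ring

lemma filter_lt_eq_Iio {m k : ℕ} (hk : k < m) :
    Finset.univ.filter (fun i : Fin m => (i : ℕ) < k) = Finset.Iio (⟨k, hk⟩ : Fin m) := by
  ext i
  simp [Fin.lt_def]

lemma card_filter_lt {m k : ℕ} (hk : k < m) :
    (Finset.univ.filter (fun i : Fin m => (i : ℕ) < k)).card = k := by
  rw [filter_lt_eq_Iio hk, Fin.card_Iio]

lemma sum_mul_le {m k : ℕ} (hk : k < m) (lam : Fin m → ℝ) (hanti : Antitone lam)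
    (b : Fin m → ℝ) (hb0 : ∀ i, 0 ≤ b i) (hb1 : ∀ i, b i ≤ 1) (hsum : ∑ i, b i = (k : ℝ)) :
    ∑ i, lam i * b i ≤ ∑ i ∈ Finset.univ.filter (fun i : Fin m => (i : ℕ) < k), lam i := by
  classical
  set p : Fin m → Prop := fun i => (i : ℕ) < k with hp
  set L : ℝ := lam ⟨k, hk⟩ with hL
  have hSb : ∑ i ∈ Finset.univ.filter p, b i + ∑ i ∈ Finset.univ.filter (fun i => ¬ p i), b i = (k : ℝ) := by
    rw [Finset.sum_filter_add_sum_filter_not]; exact hsum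
  have hcard : (Finset.univ.filter p).card = k := card_filter_lt hk
  have h2 : ∑ i ∈ Finset.univ.filter (fun i => ¬ p i), lam i * b i
      ≤ ∑ i ∈ Finset.univ.filter (fun i => ¬ p i), L * b i := by
    refine Finset.sum_le_sum fun i hi => ?_
    have hik : k ≤ (i : ℕ) := by
      simp only [Finset.mem_filter, hp] at hi
      omega
    have : lam i ≤ L := hanti (by simpa [Fin.le_def] using hik)
    exact mul_le_mul_of_nonneg_right this (hb0 i)
  have h1 : ∑ i ∈ Finset.univ.filter p, L * (1 - b i)
      ≤ ∑ i ∈ Finset.univ.filter p, lam i * (1 - b i) := by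
    refine Finset.sum_le_sum fun i hi => ?_
    have hik : (i : ℕ) ≤ k := by
      simp only [Finset.mem_filter, hp] at hi
      omega
    have : L ≤ lam i := hanti (by simpa [Fin.le_def] using hik)
    exact mul_le_mul_of_nonneg_right this (by linarith [hb1 i])
  have e1 : ∑ i ∈ Finset.univ.filter p, L * (1 - b i)
      = L * ((k : ℝ) - ∑ i ∈ Finset.univ.filter p, b i) := by
    rw [← Finset.mul_sum]
    congr 1
    rw [Finset.sum_sub_distrib, Finset.sum_const, hcard]
    simp
  have e2 : ∑ i ∈ Finset.univ.filter (fun i => ¬ p i), b i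
      = (k : ℝ) - ∑ i ∈ Finset.univ.filter p, b i := by linarith
  calc ∑ i, lam i * b i
      = ∑ i ∈ Finset.univ.filter p, lam i * b i
        + ∑ i ∈ Finset.univ.filter (fun i => ¬ p i), lam i * b i :=
        (Finset.sum_filter_add_sum_filter_not _ _ _).symm
    _ ≤ ∑ i ∈ Finset.univ.filter p, lam i * b i
        + L * ((k : ℝ) - ∑ i ∈ Finset.univ.filter p, b i) := by
        have h3 : ∑ i ∈ Finset.univ.filter (fun i => ¬ p i), L * b i
            = L * ((k : ℝ) - ∑ i ∈ Finset.univ.filter p, b i) := by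
          rw [← Finset.mul_sum, e2]
        linarith [h2, h3]
    _ ≤ ∑ i ∈ Finset.univ.filter p, lam i * b i
        + ∑ i ∈ Finset.univ.filter p, lam i * (1 - b i) := by linarith [e1 ▸ h1]
    _ = ∑ i ∈ Finset.univ.filter p, lam i := by
        rw [← Finset.sum_add_distrib]
        exact Finset.sum_congr rfl fun i _ => by ring

lemma psd_diag_nonneg {m : ℕ} {N : Matrix (Fin m) (Fin m) ℝ} (hN : N.PosSemidef) (i : Fin m) :
    0 ≤ N i i := by
  exact hN.diag_nonneg

lemma kyfan {m : ℕ} (M : Matrix (Fin m) (Fin m) ℝ) (hMh : M.IsHermitian)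
    (K : Matrix (Fin m) (Fin m) ℝ) (hK : K.PosSemidef)
    (hK1 : ((1 : Matrix (Fin m) (Fin m) ℝ) - K).PosSemidef)
    (k : ℕ) (hk : k < m) (htr : K.trace = (k : ℝ))
    (lam : Fin m → ℝ) (hanti : Antitone lam) (σ : Equiv.Perm (Fin m))
    (hσ : ∀ i, lam i = hMh.eigenvalues (σ i)) :
    (M * K).trace ≤ ∑ i ∈ Finset.univ.filter (fun i : Fin m => (i : ℕ) < k), lam i := by
  classical
  set U : Matrix (Fin m) (Fin m) ℝ := (Matrix.IsHermitian.eigenvectorUnitary hMh : Matrix (Fin m) (Fin m) ℝ) with hU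
  have hU1 : star U * U = 1 := by rw [hU]; simp
  have hU2 : U * star U = 1 := by rw [hU]; simp
  have hspec : M = U * Matrix.diagonal hMh.eigenvalues * star U := by
    have h := Matrix.IsHermitian.spectral_theorem hMh
    exact h.trans (by rw [Unitary.conjStarAlgAut_apply]; rfl)
  set N : Matrix (Fin m) (Fin m) ℝ := star U * K * U with hN
  have hNpsd : N.PosSemidef := by
    have := hK.conjTranspose_mul_mul_same U
    rw [hN]
    simpa [Matrix.star_eq_conjTranspose] using this
  have hN'psd : (star U * ((1 : Matrix (Fin m) (Fin m) ℝ) - K) * U).PosSemidef := by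
    have := hK1.conjTranspose_mul_mul_same U
    simpa [Matrix.star_eq_conjTranspose] using this
  have hNsum : N + star U * ((1 : Matrix (Fin m) (Fin m) ℝ) - K) * U = 1 := by
    rw [hN, Matrix.mul_sub, Matrix.sub_mul, Matrix.mul_one]
    rw [hU1]
    abel
  have hdle : ∀ i, N i i ≤ 1 := by
    intro i
    have h0 := psd_diag_nonneg hN'psd i
    have h1 : N i i + (star U * ((1 : Matrix (Fin m) (Fin m) ℝ) - K) * U) i i = 1 := by
      have := congrArg (fun A => A i i) hNsum
      simpa [Matrix.one_apply] using this
    linarith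
  have hdge : ∀ i, 0 ≤ N i i := psd_diag_nonneg hNpsd
  have hsumN : ∑ i, N i i = (k : ℝ) := by
    have h1 : ∑ i, N i i = N.trace := rfl
    rw [h1, hN, Matrix.trace_mul_cycle, hU2, Matrix.one_mul, htr]
  have htrMK : (M * K).trace = ∑ i, hMh.eigenvalues i * N i i := by
    have e : M * K = (U * Matrix.diagonal hMh.eigenvalues) * (star U * K) := by
      conv_lhs => rw [hspec]
      rw [Matrix.mul_assoc]
    rw [e, Matrix.trace_mul_comm, ← Matrix.mul_assoc, Matrix.trace_mul_comm, trace_diag_mul]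
  have hre : ∑ i, hMh.eigenvalues i * N i i = ∑ i, lam i * N (σ i) (σ i) := by
    rw [← Equiv.sum_comp σ (fun i => hMh.eigenvalues i * N i i)]
    exact Finset.sum_congr rfl fun i _ => by rw [hσ i]
  rw [htrMK, hre]
  exact sum_mul_le hk lam hanti (fun i => N (σ i) (σ i)) (fun i => hdge (σ i)) (fun i => hdle (σ i))
    (by rw [Equiv.sum_comp σ (fun i => N i i)]; exact hsumN)

lemma trace_Q_ge (m : ℕ) (hm : 0 < m) (T S : Finset (Fin m)) (hT : T.Nonempty) (hS : S.Nonempty) :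
    ((T ∩ S).card : ℝ) ≤ (Qmat m T * Qmat m S).trace := by
  rw [trace_Q_formula m hm T S hT hS]
  have h1 : ((T ∩ S).card : ℝ) ≤ (S.card : ℝ) :=
    Nat.cast_le.mpr (Finset.card_le_card Finset.inter_subset_right)
  have h2 : ((T ∩ S).card : ℝ) ≤ (T.card : ℝ) :=
    Nat.cast_le.mpr (Finset.card_le_card Finset.inter_subset_left)
  have hS0 : (0:ℝ) < (S.card : ℝ) := by
    exact_mod_cast Finset.card_pos.mpr hS
  have hT0 : (0:ℝ) < (T.card : ℝ) := by
    exact_mod_cast Finset.card_pos.mpr hT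
  have f1 : 0 ≤ 1 - ((T ∩ S).card : ℝ) / (S.card : ℝ) := by
    rw [sub_nonneg, div_le_one hS0]; exact h1
  have f2 : 0 ≤ 1 - ((T ∩ S).card : ℝ) / (T.card : ℝ) := by
    rw [sub_nonneg, div_le_one hT0]; exact h2
  nlinarith [mul_nonneg f1 f2]

lemma herm_trace_eq {m : ℕ} {M : Matrix (Fin m) (Fin m) ℝ} (hMh : M.IsHermitian) :
    M.trace = ∑ i, hMh.eigenvalues i := by
  have hspec : M = (hMh.eigenvectorUnitary : Matrix (Fin m) (Fin m) ℝ)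
      * Matrix.diagonal hMh.eigenvalues * star (hMh.eigenvectorUnitary : Matrix (Fin m) (Fin m) ℝ) := by
    have h := Matrix.IsHermitian.spectral_theorem hMh
    exact h.trans (by rw [Unitary.conjStarAlgAut_apply]; rfl)
  conv_lhs => rw [hspec]
  rw [Matrix.trace_mul_cycle]
  have : star (hMh.eigenvectorUnitary : Matrix (Fin m) (Fin m) ℝ)
      * (hMh.eigenvectorUnitary : Matrix (Fin m) (Fin m) ℝ) = 1 := by simp
  rw [this, Matrix.one_mul, Matrix.trace_diagonal]

theorem stmt17 (m n : ℕ) (hm : 1 ≤ m) (T : Fin n → Finset (Fin m))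
    (hTne : ∀ j, (T j).Nonempty)
    (a : Fin m → ℕ) (ha : ∀ i, a i = (Finset.univ.filter fun j => i ∈ T j).card)
    (haanti : Antitone a)
    (M : Matrix (Fin m) (Fin m) ℝ) (hM : M = ∑ j, Qmat m (T j))
    (hMh : M.IsHermitian)
    (lam : Fin m → ℝ) (hlamanti : Antitone lam)
    (hlameig : ∃ σ : Equiv.Perm (Fin m), ∀ i, lam i = hMh.eigenvalues (σ i)) :
    (∀ k : ℕ, k < m →
        ∑ i ∈ Finset.univ.filter (fun i : Fin m => (i : ℕ) < k), (a i : ℝ) ≤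
          ∑ i ∈ Finset.univ.filter (fun i : Fin m => (i : ℕ) < k), lam i) ∧
      ∑ i, lam i = ∑ i, (a i : ℝ) := by
  classical
  obtain ⟨σ, hσ⟩ := hlameig
  have hm0 : 0 < m := hm
  -- trace equality
  have htraceM : M.trace = ∑ j, ((T j).card : ℝ) := by
    rw [hM, Matrix.trace_sum]
    exact Finset.sum_congr rfl fun j _ => Qmat_trace m (T j) (hTne j)
  have hdouble : ∀ (S : Finset (Fin m)), ∑ i ∈ S, a i = ∑ j, (T j ∩ S).card := by
    intro S
    simp_rw [ha, Finset.card_filter]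
    rw [Finset.sum_comm]
    refine Finset.sum_congr rfl fun j _ => ?_
    rw [← Finset.card_filter]
    congr 1
    rw [Finset.filter_mem_eq_inter]
    exact Finset.inter_comm _ _
  have hsum_a : ∑ i, (a i : ℝ) = ∑ j, ((T j).card : ℝ) := by
    have := hdouble Finset.univ
    simp only [Finset.inter_univ] at this
    exact_mod_cast congrArg (Nat.cast : ℕ → ℝ) this
  have heq : ∑ i, lam i = ∑ i, (a i : ℝ) := by
    have h1 : ∑ i, lam i = ∑ i, hMh.eigenvalues i := by
      rw [Finset.sum_congr rfl fun i _ => hσ i]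
      exact Equiv.sum_comp σ _
    rw [h1, ← herm_trace_eq hMh, htraceM, hsum_a]
  refine ⟨?_, heq⟩
  intro k hk
  rcases Nat.eq_zero_or_pos k with rfl | hkpos
  · simp
  set S : Finset (Fin m) := Finset.univ.filter (fun i : Fin m => (i : ℕ) < k) with hS
  have hSne : S.Nonempty := ⟨⟨0, hm0⟩, by simp [hS, hkpos]⟩
  have hScard : S.card = k := card_filter_lt hk
  have step1 : ∑ i ∈ S, (a i : ℝ) = ∑ j, ((T j ∩ S).card : ℝ) := by
    exact_mod_cast congrArg (Nat.cast : ℕ → ℝ) (hdouble S)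
  have step2 : ∑ j, ((T j ∩ S).card : ℝ) ≤ (M * Qmat m S).trace := by
    rw [hM, Finset.sum_mul, Matrix.trace_sum]
    exact Finset.sum_le_sum fun j _ => trace_Q_ge m hm0 (T j) S (hTne j) hSne
  have step3 : (M * Qmat m S).trace ≤ ∑ i ∈ S, lam i := by
    refine kyfan M hMh (Qmat m S) (Qmat_psd m hm0 S hSne) (one_sub_Qmat_psd m hm0 S hSne)
      k hk ?_ lam hlamanti σ hσ
    rw [Qmat_trace m S hSne, hScard]
  calc ∑ i ∈ S, (a i : ℝ) = ∑ j, ((T j ∩ S).card : ℝ) := step1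
    _ ≤ (M * Qmat m S).trace := step2
    _ ≤ ∑ i ∈ S, lam i := step3
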